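/- For integers i ≥ j ≥ 0, the number of shortest 8-neighbor (king-move) paths in Z^2 from (0,0) to (i,j) equals the sum over nonnegative integers b with 2b ≤ i−j of i! / (b!·(j+b)!·(i−j−2b)!). -/

import Mathlib

/-- Two points of `ℤ²` are 8-neighbors (king moves): distinct and each coordinate differs
by at most 1. -/
def Adj8 (p q : ℤ × ℤ) : Prop :=
  p ≠ q ∧ (p.1 - q.1).natAbs ≤ 1 ∧ (p.2 - q.2).natAbs ≤ 1

/-- `f` is an 8-neighbor path of length `n` from `p` to `q`. -/
def IsPath8 (n : ℕ) (f : Fin (n + 1) → ℤ × ℤ) (p q : ℤ × ℤ) : Prop :=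
  f 0 = p ∧ f (Fin.last n) = q ∧ ∀ t : Fin n, Adj8 (f t.castSucc) (f t.succ)

-- extension of s to ℕ
def extS {i : ℕ} (s : Fin i → ℤ) : ℕ → ℤ := fun u => if h : u < i then s ⟨u, h⟩ else 0

-- path from steps
def pathOf {i : ℕ} (s : Fin i → ℤ) : Fin (i + 1) → ℤ × ℤ :=
  fun k => ((k : ℤ), ∑ u ∈ Finset.range k, extS s u)

def SeqOK (i j : ℕ) (s : Fin i → ℤ) : Prop :=
  (∀ t, s t = -1 ∨ s t = 0 ∨ s t = 1) ∧ ∑ t, s t = (j : ℤ)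

lemma pathOf_isPath {i j : ℕ} (s : Fin i → ℤ) (hs : SeqOK i j s) :
    IsPath8 i (pathOf s) (0, 0) ((i : ℤ), (j : ℤ)) := by
  obtain ⟨h1, h2⟩ := hs
  refine ⟨by simp [pathOf], ?_, ?_⟩
  · have : ∑ u ∈ Finset.range i, extS s u = ∑ t, s t := by
      rw [← Fin.sum_univ_eq_sum_range (extS s) i]
      exact Finset.sum_congr rfl fun t _ => by simp [extS, t.isLt]
    simp [pathOf, Fin.last, this, h2]
  · intro t
    have hv : (t : ℕ) < i := t.isLt
    have hstep : ∑ u ∈ Finset.range ((t : ℕ) + 1), extS s u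
        = (∑ u ∈ Finset.range (t : ℕ), extS s u) + s t := by
      rw [Finset.sum_range_succ]
      simp [extS, hv]
    have hval : extS s t = s t := by simp [extS, hv]
    refine ⟨?_, ?_, ?_⟩
    · have hne : ((pathOf s) t.castSucc).1 ≠ ((pathOf s) t.succ).1 := by
        simp only [pathOf, Fin.coe_castSucc, Fin.val_succ]
        push_cast
        omega
      exact fun he => hne (congrArg Prod.fst he)
    · simp [pathOf]
    · simp only [pathOf, Fin.coe_castSucc, Fin.val_succ, hstep]
      rcases h1 t with hh | hh | hh <;> simp [hh]


lemma pathOf_injOn {i j : ℕ} : ∀ s s' : Fin i → ℤ, pathOf s = pathOf s' → s = s' := by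
  intro s s' hss
  funext t
  have h1 := congrArg (fun f => (f t.succ).2) hss
  have h2 := congrArg (fun f => (f t.castSucc).2) hss
  simp only [pathOf, Fin.val_succ, Fin.coe_castSucc] at h1 h2
  have e1 : ∀ s'' : Fin i → ℤ, ∑ u ∈ Finset.range ((t : ℕ) + 1), extS s'' u
      = (∑ u ∈ Finset.range (t : ℕ), extS s'' u) + s'' t := by
    intro s''
    rw [Finset.sum_range_succ]
    simp [extS, t.isLt]
  rw [e1 s, e1 s'] at h1
  omega

lemma path_surj {i j : ℕ} (f : Fin (i + 1) → ℤ × ℤ)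
    (hf : IsPath8 i f (0, 0) ((i : ℤ), (j : ℤ))) :
    ∃ s : Fin i → ℤ, SeqOK i j s ∧ pathOf s = f := by
  obtain ⟨h0, hlast, hadj⟩ := hf
  -- x and y coordinate functions on ℕ
  set F : ℕ → ℤ := fun k => if h : k < i + 1 then (f ⟨k, h⟩).1 else 0 with hF
  set G : ℕ → ℤ := fun k => if h : k < i + 1 then (f ⟨k, h⟩).2 else 0 with hG
  have hF0 : F 0 = 0 := by simp [hF, h0]
  have hG0 : G 0 = 0 := by simp [hG, h0]
  have hFlast : F i = i := by
    simp only [hF, dif_pos (Nat.lt_succ_self i)]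
    rw [show (⟨i, Nat.lt_succ_self i⟩ : Fin (i+1)) = Fin.last i from rfl, hlast]
  have hGlast : G i = j := by
    simp only [hG, dif_pos (Nat.lt_succ_self i)]
    rw [show (⟨i, Nat.lt_succ_self i⟩ : Fin (i+1)) = Fin.last i from rfl, hlast]
  -- steps
  have hFstep : ∀ t : Fin i, F ((t : ℕ) + 1) - F (t : ℕ) = (f t.succ).1 - (f t.castSucc).1 := by
    intro t
    have h1 : (t : ℕ) + 1 < i + 1 := by omega
    have h2 : (t : ℕ) < i + 1 := by omega
    simp only [hF, dif_pos h1, dif_pos h2]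
    rfl
  have hGstep : ∀ t : Fin i, G ((t : ℕ) + 1) - G (t : ℕ) = (f t.succ).2 - (f t.castSucc).2 := by
    intro t
    have h1 : (t : ℕ) + 1 < i + 1 := by omega
    have h2 : (t : ℕ) < i + 1 := by omega
    simp only [hG, dif_pos h1, dif_pos h2]
    rfl
  -- each x-step ≤ 1 in fact = 1
  have hdx_le : ∀ t : Fin i, F ((t : ℕ) + 1) - F (t : ℕ) ≤ 1 := by
    intro t
    have := (hadj t).2.1
    rw [hFstep t]
    omega
  have hsumdx : ∑ u ∈ Finset.range i, (F (u + 1) - F u) = (i : ℤ) := by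
    rw [Finset.sum_range_sub, hFlast, hF0, sub_zero]
  have hdx_eq : ∀ t : Fin i, F ((t : ℕ) + 1) - F (t : ℕ) = 1 := by
    have hle : ∀ u ∈ Finset.range i, F (u + 1) - F u ≤ 1 := by
      intro u hu
      simp only [Finset.mem_range] at hu
      exact hdx_le ⟨u, hu⟩
    have heq : ∑ u ∈ Finset.range i, (F (u + 1) - F u) = ∑ u ∈ Finset.range i, (1 : ℤ) := by
      rw [hsumdx]; simp
    have := (Finset.sum_eq_sum_iff_of_le hle).mp heq
    intro t
    exact this (t : ℕ) (Finset.mem_range.mpr t.isLt)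
  -- x coordinate of f k is k
  have hFk : ∀ k, k ≤ i → F k = k := by
    intro k hk
    have : ∑ u ∈ Finset.range k, (F (u + 1) - F u) = F k - F 0 := Finset.sum_range_sub F k
    have hall : ∑ u ∈ Finset.range k, (F (u + 1) - F u) = ∑ u ∈ Finset.range k, (1 : ℤ) := by
      refine Finset.sum_congr rfl fun u hu => ?_
      simp only [Finset.mem_range] at hu
      exact hdx_eq ⟨u, by omega⟩
    rw [hall] at this
    simp at this
    omega
  -- define s
  refine ⟨fun t => (f t.succ).2 - (f t.castSucc).2, ⟨?_, ?_⟩, ?_⟩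
  · intro t
    have hd := (hadj t).2.2
    show (f t.succ).2 - (f t.castSucc).2 = -1 ∨ (f t.succ).2 - (f t.castSucc).2 = 0
      ∨ (f t.succ).2 - (f t.castSucc).2 = 1
    omega
  · have : ∑ t : Fin i, ((f t.succ).2 - (f t.castSucc).2) = ∑ u ∈ Finset.range i, (G (u + 1) - G u) := by
      rw [← Fin.sum_univ_eq_sum_range (fun u => G (u + 1) - G u) i]
      exact Finset.sum_congr rfl fun t _ => (hGstep t).symm
    rw [this, Finset.sum_range_sub, hGlast, hG0, sub_zero]
  · funext k
    have hk : (k : ℕ) ≤ i := by omega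
    have hx : (f k).1 = (k : ℕ) := by
      have := hFk (k : ℕ) hk
      simp only [hF, dif_pos k.isLt] at this
      rw [← this]
    have hy : (f k).2 = ∑ u ∈ Finset.range (k : ℕ), extS (fun t : Fin i => (f t.succ).2 - (f t.castSucc).2) u := by
      have htel : ∑ u ∈ Finset.range (k : ℕ), (G (u + 1) - G u) = G (k : ℕ) - G 0 :=
        Finset.sum_range_sub G (k : ℕ)
      have hGk : G (k : ℕ) = (f k).2 := by simp only [hG, dif_pos k.isLt]
      have hcong : ∑ u ∈ Finset.range (k : ℕ), (G (u + 1) - G u)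
          = ∑ u ∈ Finset.range (k : ℕ), extS (fun t : Fin i => (f t.succ).2 - (f t.castSucc).2) u := by
        refine Finset.sum_congr rfl fun u hu => ?_
        simp only [Finset.mem_range] at hu
        have hui : u < i := by omega
        rw [hGstep ⟨u, hui⟩]
        simp [extS, hui]
      rw [← hcong, htel, hG0, sub_zero, hGk]
    simp only [pathOf]
    exact Prod.ext (by rw [hx]) (by rw [← hy])

-- sum of a {-1,0,1}-valued function counts fibers
lemma sum_eq_card_sub_card {n : ℕ} (s : Fin n → ℤ)
    (h : ∀ t, s t = -1 ∨ s t = 0 ∨ s t = 1) :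
    ∑ t, s t = ((Finset.univ.filter (fun t => s t = 1)).card : ℤ)
      - ((Finset.univ.filter (fun t => s t = -1)).card : ℤ) := by
  calc ∑ t, s t
      = ∑ t, ((if s t = 1 then (1 : ℤ) else 0) - (if s t = -1 then (1 : ℤ) else 0)) := by
        refine Finset.sum_congr rfl fun t _ => ?_
        rcases h t with hh | hh | hh <;> simp [hh]
    _ = _ := by rw [Finset.sum_sub_distrib, Finset.sum_boole, Finset.sum_boole]

def seqOfPair {n : ℕ} (x : Finset (Fin n) × Finset (Fin n)) : Fin n → ℤ :=
  fun t => if t ∈ x.2 then 1 else if t ∈ x.1 then -1 else 0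

lemma filter_seqOfPair_one {n : ℕ} (x : Finset (Fin n) × Finset (Fin n)) :
    Finset.univ.filter (fun t => seqOfPair x t = 1) = x.2 := by
  ext t
  simp only [Finset.mem_filter, Finset.mem_univ, true_and, seqOfPair]
  by_cases h2 : t ∈ x.2
  · simp [h2]
  · by_cases h1 : t ∈ x.1 <;> simp [h1, h2]

lemma filter_seqOfPair_negone {n : ℕ} (x : Finset (Fin n) × Finset (Fin n))
    (hd : Disjoint x.1 x.2) :
    Finset.univ.filter (fun t => seqOfPair x t = -1) = x.1 := by
  ext t
  rw [Finset.mem_filter]; simp only [Finset.mem_univ, true_and, seqOfPair]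
  by_cases h1 : t ∈ x.1
  · have h2 : t ∉ x.2 := Finset.disjoint_left.mp hd h1
    simp [h1, h2]
  · by_cases h2 : t ∈ x.2 <;> simp [h1, h2]

lemma seqOfPair_mem {n : ℕ} (x : Finset (Fin n) × Finset (Fin n)) :
    ∀ t, seqOfPair x t = -1 ∨ seqOfPair x t = 0 ∨ seqOfPair x t = 1 := by
  intro t
  simp only [seqOfPair]
  by_cases h2 : t ∈ x.2
  · simp [h2]
  · by_cases h1 : t ∈ x.1 <;> simp [h1, h2]

lemma seqOfPair_sum {n : ℕ} (x : Finset (Fin n) × Finset (Fin n)) (hd : Disjoint x.1 x.2) :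
    ∑ t, seqOfPair x t = (x.2.card : ℤ) - (x.1.card : ℤ) := by
  rw [sum_eq_card_sub_card _ (seqOfPair_mem x), filter_seqOfPair_one,
    filter_seqOfPair_negone _ hd]

lemma card_seq_eq_card_pairs (n : ℕ) (j : ℤ) :
    Nat.card {s : Fin n → ℤ // (∀ t, s t = -1 ∨ s t = 0 ∨ s t = 1) ∧ ∑ t, s t = j}
      = Nat.card {x : Finset (Fin n) × Finset (Fin n) //
          Disjoint x.1 x.2 ∧ (x.2.card : ℤ) - (x.1.card : ℤ) = j} := by
  refine (Nat.card_eq_of_bijective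
    (fun x => ⟨seqOfPair x.1, seqOfPair_mem x.1,
      by rw [seqOfPair_sum x.1 x.2.1]; exact x.2.2⟩) ⟨?_, ?_⟩).symm
  · rintro ⟨x, hx⟩ ⟨y, hy⟩ hxy
    have hs : seqOfPair x = seqOfPair y := congrArg Subtype.val hxy
    have e2 : x.2 = y.2 := by
      rw [← filter_seqOfPair_one x, ← filter_seqOfPair_one y, hs]
    have e1 : x.1 = y.1 := by
      rw [← filter_seqOfPair_negone x hx.1, ← filter_seqOfPair_negone y hy.1, hs]
    exact Subtype.ext (Prod.ext e1 e2)
  · rintro ⟨s, hs1, hs2⟩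
    refine ⟨⟨(Finset.univ.filter (fun t => s t = -1), Finset.univ.filter (fun t => s t = 1)),
      ?_, ?_⟩, ?_⟩
    · rw [Finset.disjoint_left]
      intro t ht1 ht2
      simp only [Finset.mem_filter] at ht1 ht2
      omega
    · have := sum_eq_card_sub_card s hs1
      rw [hs2] at this
      exact this.symm
    · refine Subtype.ext (funext fun t => ?_)
      simp only [seqOfPair, Finset.mem_filter, Finset.mem_univ, true_and]
      rcases hs1 t with hh | hh | hh <;> simp [hh]

-- counting disjoint pairs of given sizes
lemma card_disjoint_pairs (n b c : ℕ) :
    (Finset.univ.filter (fun x : Finset (Fin n) × Finset (Fin n) =>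
       Disjoint x.1 x.2 ∧ x.1.card = b ∧ x.2.card = c)).card
      = n.choose b * (n - b).choose c := by
  rw [Finset.card_eq_sum_card_fiberwise
    (f := Prod.fst) (t := Finset.powersetCard b Finset.univ)
    (fun x hx => by
      rw [Finset.mem_coe, Finset.mem_filter] at hx
      exact Finset.mem_powersetCard_univ.mpr hx.2.2.1)]
  have hterm : ∀ A ∈ Finset.powersetCard b (Finset.univ : Finset (Fin n)),
      ((Finset.univ.filter (fun x : Finset (Fin n) × Finset (Fin n) =>
        Disjoint x.1 x.2 ∧ x.1.card = b ∧ x.2.card = c)).filter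
          (fun x => x.1 = A)).card = (n - b).choose c := by
    intro A hA
    have hAcard : A.card = b := Finset.mem_powersetCard_univ.mp hA
    have : ((Finset.univ.filter (fun x : Finset (Fin n) × Finset (Fin n) =>
        Disjoint x.1 x.2 ∧ x.1.card = b ∧ x.2.card = c)).filter
          (fun x => x.1 = A)).card = (Finset.powersetCard c Aᶜ).card := by
      refine Finset.card_bij' (fun x _ => x.2) (fun B _ => (A, B)) ?_ ?_ ?_ ?_
      · intro x hx
        simp only [Finset.mem_filter, Finset.mem_univ, true_and] at hx
        obtain ⟨⟨hd, _, hc⟩, h1⟩ := hx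
        rw [Finset.mem_powersetCard]
        subst h1
        refine ⟨fun a ha => ?_, hc⟩
        rw [Finset.mem_compl]
        exact fun hA => Finset.disjoint_left.mp hd hA ha
      · intro B hB
        rw [Finset.mem_powersetCard] at hB
        simp only [Finset.mem_filter, Finset.mem_univ, true_and]
        refine ⟨⟨?_, hAcard, hB.2⟩, trivial⟩
        rw [Finset.disjoint_left]
        intro a haA haB
        have := hB.1 haB
        simp only [Finset.mem_compl] at this
        exact this haA
      · intro x hx
        simp only [Finset.mem_filter] at hx
        exact Prod.ext hx.2.symm rfl
      · intro B _
        rfl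

    rw [this, Finset.card_powersetCard, Finset.card_compl, hAcard, Fintype.card_fin]
  rw [Finset.sum_congr rfl hterm, Finset.sum_const, Finset.card_powersetCard,
    Finset.card_univ, Fintype.card_fin, smul_eq_mul]


/-- For `i ≥ j ≥ 0`, the number of shortest 8-neighbor paths from `(0,0)` to `(i,j)`
equals `∑_{b ≥ 0, 2b ≤ i−j} i!/(b!·(j+b)!·(i−j−2b)!)`. -/
theorem count_shortest_paths_8N (i j : ℕ) (h : j ≤ i) :
    Nat.card {f : Fin (i + 1) → ℤ × ℤ // IsPath8 i f (0, 0) ((i : ℤ), (j : ℤ))} =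
      ∑ b ∈ Finset.range (i + 1),
        if 2 * b ≤ i - j then
          Nat.factorial i /
            (Nat.factorial b * Nat.factorial (j + b) * Nat.factorial (i - j - 2 * b))
        else 0 := by
  -- Step 1: paths biject with step sequences
  have step1 : Nat.card {f : Fin (i + 1) → ℤ × ℤ // IsPath8 i f (0, 0) ((i : ℤ), (j : ℤ))}
      = Nat.card {s : Fin i → ℤ // (∀ t, s t = -1 ∨ s t = 0 ∨ s t = 1) ∧ ∑ t, s t = (j : ℤ)} := by
    refine (Nat.card_eq_of_bijective
      (fun s => ⟨pathOf s.1, pathOf_isPath s.1 s.2⟩) ⟨?_, ?_⟩).symm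
    · rintro ⟨s, _⟩ ⟨s', _⟩ hss
      exact Subtype.ext (pathOf_injOn (j := j) s s' (congrArg Subtype.val hss))
    · rintro ⟨f, hf⟩
      obtain ⟨s, hs, hsf⟩ := path_surj f hf
      exact ⟨⟨s, hs⟩, Subtype.ext hsf⟩
  rw [step1, card_seq_eq_card_pairs]
  clear step1
  -- Step 2: compute the pair count
  rw [Nat.card_eq_fintype_card, Fintype.card_subtype]
  have hfib := Finset.card_eq_sum_card_fiberwise
    (f := fun x : Finset (Fin i) × Finset (Fin i) => x.1.card)
    (s := Finset.univ.filter (fun x : Finset (Fin i) × Finset (Fin i) =>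
      Disjoint x.1 x.2 ∧ (x.2.card : ℤ) - (x.1.card : ℤ) = (j : ℤ)))
    (t := Finset.range (i + 1))
    (fun x _ => Finset.mem_range.mpr (Nat.lt_succ_of_le (by
      simpa using Finset.card_le_card (Finset.subset_univ x.1))))
  rw [hfib]
  clear hfib
  refine Finset.sum_congr rfl fun b hb => ?_
  have hbi : b ≤ i := by simpa [Nat.lt_succ_iff] using hb
  have hfilter : ((Finset.univ.filter (fun x : Finset (Fin i) × Finset (Fin i) =>
      Disjoint x.1 x.2 ∧ (x.2.card : ℤ) - (x.1.card : ℤ) = (j : ℤ))).filter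
        (fun x => x.1.card = b))
      = Finset.univ.filter (fun x : Finset (Fin i) × Finset (Fin i) =>
          Disjoint x.1 x.2 ∧ x.1.card = b ∧ x.2.card = j + b) := by
    ext x
    simp only [Finset.mem_filter, Finset.mem_univ, true_and]
    constructor
    · rintro ⟨⟨hd, hc⟩, hb1⟩
      exact ⟨hd, hb1, by omega⟩
    · rintro ⟨hd, hb1, hb2⟩
      exact ⟨⟨hd, by omega⟩, hb1⟩
  rw [hfilter, card_disjoint_pairs]
  by_cases hcase : 2 * b ≤ i - j
  · rw [if_pos hcase]
    have h2 : j + b ≤ i - b := by omega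
    have e1 := Nat.choose_mul_factorial_mul_factorial hbi
    have e2 := Nat.choose_mul_factorial_mul_factorial h2
    have e3 : i - b - (j + b) = i - j - 2 * b := by omega
    rw [e3] at e2
    refine (Nat.div_eq_of_eq_mul_left ?_ ?_).symm
    · exact Nat.mul_pos (Nat.mul_pos b.factorial_pos (j + b).factorial_pos)
        (i - j - 2 * b).factorial_pos
    · calc i.factorial = i.choose b * b.factorial * (i - b).factorial := e1.symm
        _ = i.choose b * b.factorial
            * ((i - b).choose (j + b) * (j + b).factorial * (i - j - 2 * b).factorial) := by
          rw [e2]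
        _ = i.choose b * (i - b).choose (j + b)
            * (b.factorial * (j + b).factorial * (i - j - 2 * b).factorial) := by ring
  · rw [if_neg hcase, Nat.choose_eq_zero_of_lt (by omega : i - b < j + b), mul_zero]
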